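/- There exist n₀ ∈ ℕ and K > 0 such that for every integer n ≥ n₀, the set F_n contains an arithmetic progression of length at least n/(K·log n); that is, there exist a ∈ ℝ and t > 0 such that a + i·t ∈ F_n for every integer i with 0 ≤ i < n/(K·log n). -/

import Mathlib

/-- The Gauss map `x ↦ {1/x}`. -/
noncomputable def gaussMap (x : ℝ) : ℝ := Int.fract (1 / x)

/-- `Fset n` is the set of irrational numbers in `(0,1)` all of whose continued
fraction partial quotients are at most `n`. The `(k+1)`-st partial quotient of `x`
is `⌊1 / G^[k] x⌋` where `G` is the Gauss map. -/
noncomputable def Fset (n : ℕ) : Set ℝ :=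
  {x | Irrational x ∧ x ∈ Set.Ioo (0 : ℝ) 1 ∧
    ∀ k : ℕ, ⌊1 / (gaussMap^[k] x)⌋ ≤ (n : ℤ)}

/-- Basic facts about one step of the Gauss map on an irrational in `(0,1)`. -/
lemma gauss_step {x : ℝ} (hirr : Irrational x) (h0 : 0 < x) (h1 : x < 1) :
    Irrational (gaussMap x) ∧ 0 < gaussMap x ∧ gaussMap x < 1 ∧
      gaussMap x = 1/x - (⌊1/x⌋ : ℝ) ∧ 1 ≤ ⌊1/x⌋ ∧ (⌊1/x⌋ : ℝ) < 1/x := by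
  have hx0 : x ≠ 0 := ne_of_gt h0
  have hinv : Irrational (1/x) := by
    simpa [one_div] using hirr.inv
  have hfe : gaussMap x = 1/x - (⌊1/x⌋ : ℝ) := rfl
  have hgi : Irrational (gaussMap x) := by
    rw [hfe]; exact hinv.sub_intCast _
  have hlt : (⌊1/x⌋ : ℝ) < 1/x := lt_of_le_of_ne (Int.floor_le _) (Ne.symm (hinv.ne_int _))
  have h1x : 1 < 1/x := by
    rw [lt_div_iff₀ h0]; linarith
  have hm1 : 1 ≤ ⌊1/x⌋ := by
    rw [Int.le_floor]; push_cast; linarith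
  refine ⟨hgi, ?_, ?_, hfe, hm1, hlt⟩
  · rw [hfe]; linarith
  · rw [hfe]
    have := Int.lt_floor_add_one (1/x)
    linarith

/-- Convergent-pair invariant along the Gauss map orbit. -/
def InvP (y x : ℝ) : Prop :=
  ∃ a b c d : ℤ, 1 ≤ a ∧ 0 ≤ c ∧
    ((a : ℝ) * y - b) = -x * ((c : ℝ) * y - d) ∧
    |(c : ℝ) * y - d| * ((a : ℝ) + (c : ℝ) * x) = 1

/-- If `y` satisfies a uniform Diophantine lower bound `q|qy - p| > 1/B`, then all Gauss
map iterates of `y` are irrational numbers in `(0,1)` with `1/(G^[j] y) < B`, i.e. all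
partial quotients of `y` are less than `B`. -/
lemma key (B y : ℝ) (hB : 0 < B) (hy : Irrational y) (h0 : 0 < y) (h1 : y < 1)
    (h : ∀ q p : ℤ, 1 ≤ q → 1/B < (q : ℝ) * |(q : ℝ) * y - p|) (j : ℕ) :
    Irrational (gaussMap^[j] y) ∧ 0 < gaussMap^[j] y ∧ gaussMap^[j] y < 1 ∧
      1 / gaussMap^[j] y < B := by
  suffices H : ∀ k : ℕ, Irrational (gaussMap^[k] y) ∧ 0 < gaussMap^[k] y ∧
      gaussMap^[k] y < 1 ∧ InvP y (gaussMap^[k] y) by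
    obtain ⟨hirr, hx0, hx1, a, b, c, d, ha, hc, hrel, hnorm⟩ := H j
    set x := gaussMap^[j] y with hxdef
    refine ⟨hirr, hx0, hx1, ?_⟩
    have hq := h a b ha
    have haR : (1:ℝ) ≤ (a:ℝ) := by exact_mod_cast ha
    have hcR : (0:ℝ) ≤ (c:ℝ) := by exact_mod_cast hc
    have habs : |(a:ℝ) * y - b| = x * |(c:ℝ) * y - d| := by
      rw [hrel, abs_mul, abs_neg, abs_of_pos hx0]
    have hwnn : (0:ℝ) ≤ |(c:ℝ)*y - d| := abs_nonneg _
    have h1 : (a:ℝ) * |(c:ℝ)*y - d| ≤ 1 := by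
      nlinarith [mul_nonneg (mul_nonneg hcR (le_of_lt hx0)) hwnn]
    have hfin : (a:ℝ) * |(a:ℝ) * y - b| ≤ x := by
      rw [habs]; nlinarith
    have hBx : 1/B < x := lt_of_lt_of_le hq hfin
    rw [div_lt_iff₀ hB] at hBx
    rw [div_lt_iff₀ hx0]
    nlinarith
  intro k
  induction k with
  | zero =>
    refine ⟨by simpa using hy, by simpa using h0, by simpa using h1,
      1, 0, 0, 1, le_refl _, le_refl _, ?_, ?_⟩ <;> push_cast <;> simp
  | succ k ih =>
    obtain ⟨hirr, hx0, hx1, a, b, c, d, ha, hc, hrel, hnorm⟩ := ih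
    set x := gaussMap^[k] y with hxdef
    obtain ⟨hgi, hg0, hg1, hfe, hm1, hmlt⟩ := gauss_step hirr hx0 hx1
    rw [Function.iterate_succ_apply', ← hxdef]
    set m := ⌊1/x⌋ with hmdef
    have hx0' : x ≠ 0 := ne_of_gt hx0
    refine ⟨hgi, hg0, hg1, m*a + c, m*b + d, a, b, ?_, by linarith, ?_, ?_⟩
    · have : 1 ≤ m * a := by nlinarith
      linarith
    · rw [hfe]
      have h2 : (1/x) * x = 1 := by field_simp
      push_cast
      linear_combination (1/x) * hrel - ((c:ℝ)*y - d) * h2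
    · rw [hfe]
      have habs : |(a:ℝ) * y - b| = x * |(c:ℝ)*y - d| := by
        rw [hrel, abs_mul, abs_neg, abs_of_pos hx0]
      have e1 : ((m:ℝ)*a + c) + (a:ℝ)*(1/x - m) = ((a:ℝ) + c*x)/x := by
        field_simp; ring
      have e2 : x * |(c:ℝ)*y - d| * (((a:ℝ) + c*x)/x) = |(c:ℝ)*y - d| * ((a:ℝ) + c*x) := by
        field_simp
      push_cast
      rw [habs, e1, e2]
      exact hnorm

noncomputable def phi : ℝ := (Real.sqrt 5 - 1) / 2

lemma sqrt5_facts : ∃ s : ℝ, 0 ≤ s ∧ s ^ 2 = 5 ∧ 2.23 < s ∧ s < 2.24 ∧ Irrational s ∧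
    phi = (s - 1) / 2 := by
  refine ⟨Real.sqrt 5, Real.sqrt_nonneg 5, Real.sq_sqrt (by norm_num), ?_, ?_, ?_, rfl⟩
  · nlinarith [Real.sq_sqrt (by norm_num : (0:ℝ) ≤ 5), Real.sqrt_nonneg 5]
  · nlinarith [Real.sq_sqrt (by norm_num : (0:ℝ) ≤ 5), Real.sqrt_nonneg 5]
  · have h : Irrational (Real.sqrt (5:ℕ)) := (by norm_num : Nat.Prime 5).irrational_sqrt
    simpa using h

/-- The golden-type Diophantine bound: `q * |q*phi - p| > 1/3` for all integers `q ≥ 1`. -/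
lemma golden_bound (q p : ℤ) (hq : 1 ≤ q) :
    (1:ℝ)/3 < (q:ℝ) * |(q:ℝ) * phi - p| := by
  obtain ⟨s, hs0, hs2, hsl, hsu, hirrs, hphi⟩ := sqrt5_facts
  rw [hphi]
  have hqR : (1:ℝ) ≤ (q:ℝ) := by exact_mod_cast hq
  have hqpos : (0:ℝ) < (q:ℝ) := by linarith
  obtain ⟨A, hA⟩ : ∃ A : ℝ, A = (q:ℝ) * ((s - 1)/2) - p := ⟨_, rfl⟩
  obtain ⟨C, hC⟩ : ∃ C : ℝ, C = (q:ℝ) * ((-s - 1)/2) - p := ⟨_, rfl⟩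
  rw [← hA]
  have hN : (p^2 + p*q - q^2 : ℤ) ≠ 0 := by
    intro hz
    have hz' : ((p:ℝ))^2 + (p:ℝ)*(q:ℝ) - (q:ℝ)^2 = 0 := by
      exact_mod_cast congrArg (fun z : ℤ => (z:ℝ)) hz
    have h5 : ((2*p + q : ℤ) : ℝ)^2 = (s * q)^2 := by push_cast; nlinarith
    have hsq0 : (0:ℝ) ≤ s * (q:ℝ) := by positivity
    have h7 : (((2*p + q : ℤ) : ℝ) - s*q) * (((2*p + q : ℤ) : ℝ) + s*q) = 0 := by
      nlinarith [h5]
    have habs : |((2*p + q : ℤ) : ℝ)| = s * q := by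
      rcases mul_eq_zero.mp h7 with h | h
      · exact (abs_eq hsq0).mpr (Or.inl (by linarith))
      · exact (abs_eq hsq0).mpr (Or.inr (by linarith))
    exact hirrs ⟨((|2*p + q| : ℤ) : ℚ) / (q : ℚ), by
      push_cast
      rw [div_eq_iff (ne_of_gt hqpos)]
      rw [← habs]
      push_cast
      ring⟩
  have hprod : A * C = (p:ℝ)^2 + (p:ℝ)*(q:ℝ) - (q:ℝ)^2 := by
    rw [hA, hC]; nlinarith [hs2]
  have hone : (1:ℝ) ≤ |A| * |C| := by
    rw [← abs_mul, hprod]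
    have h1 : (1:ℝ) ≤ |((p^2 + p*q - q^2 : ℤ) : ℝ)| := by
      rw [← Int.cast_abs]
      exact_mod_cast Int.one_le_abs hN
    have h2 : ((p^2 + p*q - q^2 : ℤ) : ℝ) = (p:ℝ)^2 + (p:ℝ)*(q:ℝ) - (q:ℝ)^2 := by
      push_cast; ring
    rwa [h2] at h1
  by_cases hcase : (1:ℝ)/2 ≤ (q:ℝ) * |A|
  · linarith
  · push_neg at hcase
    have hApos : (0:ℝ) ≤ |A| := abs_nonneg A
    have hAsmall : |A| < 1/2 := by nlinarith
    have hpbound : |(p:ℝ)| ≤ (q:ℝ) * ((s-1)/2) + |A| := by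
      have hp : (p:ℝ) = (q:ℝ) * ((s-1)/2) - A := by rw [hA]; ring
      rw [hp]
      calc |(q:ℝ) * ((s-1)/2) - A| ≤ |(q:ℝ) * ((s-1)/2)| + |A| := abs_sub _ _
        _ = (q:ℝ) * ((s-1)/2) + |A| := by
            rw [abs_of_nonneg (by nlinarith : (0:ℝ) ≤ (q:ℝ) * ((s-1)/2))]
    have hCbound : |C| ≤ 2.8 * (q:ℝ) := by
      have h1 : |C| ≤ |(q:ℝ) * ((-s - 1)/2)| + |(p:ℝ)| := by
        rw [hC]; exact abs_sub _ _
      have h2 : |(q:ℝ) * ((-s - 1)/2)| = (q:ℝ) * ((s+1)/2) := by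
        rw [abs_mul, abs_of_pos hqpos, abs_of_nonpos (by nlinarith : (-s-1)/2 ≤ 0)]
        ring
      rw [h2] at h1
      nlinarith
    nlinarith

lemma irr_phi : Irrational phi := by
  obtain ⟨s, hs0, hs2, hsl, hsu, hirrs, hphi⟩ := sqrt5_facts
  rw [hphi]
  have h1 : Irrational (s - (1:ℤ)) := hirrs.sub_intCast 1
  have h2 : Irrational ((s - (1:ℤ)) / ((2:ℤ):ℝ)) := by
    have := h1.div_intCast (by norm_num : (2:ℤ) ≠ 0)
    simpa using this
  simpa using h2

lemma phi_bounds : 0.6 < phi ∧ phi < 0.62 := by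
  obtain ⟨s, hs0, hs2, hsl, hsu, hirrs, hphi⟩ := sqrt5_facts
  rw [hphi]
  constructor <;> nlinarith

lemma log_ge_three {n : ℕ} (hn : 100 ≤ n) : (3:ℝ) ≤ Real.log n := by
  have hn0 : (0:ℝ) < (n:ℝ) := by
    have : (100:ℝ) ≤ (n:ℝ) := by exact_mod_cast hn
    linarith
  have h100 : (100:ℝ) ≤ (n:ℝ) := by exact_mod_cast hn
  have e1 : Real.exp 1 < 2.7182818286 := Real.exp_one_lt_d9
  have e3 : Real.exp 3 < 100 := by
    have h3 : Real.exp 3 = (Real.exp 1)^3 := by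
      rw [← Real.exp_nat_mul]; norm_num
    rw [h3]
    have h4 : (Real.exp 1)^3 < 2.7182818286^3 :=
      pow_lt_pow_left₀ e1 (le_of_lt (Real.exp_pos 1)) (by norm_num)
    nlinarith
  have : (3:ℝ) < Real.log n := by
    rw [Real.lt_log_iff_exp_lt hn0]
    linarith
  linarith

theorem stmt2 :
    ∃ n₀ : ℕ, ∃ K : ℝ, 0 < K ∧
      ∀ n : ℕ, n₀ ≤ n →
        ∃ a t : ℝ, 0 < t ∧
          ∀ i : ℕ, (i : ℝ) < (n : ℝ) / (K * Real.log n) →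
            a + i * t ∈ Fset n := by
  refine ⟨100, 10, by norm_num, ?_⟩
  intro n hn
  set v : ℕ := n / 3 with hvdef
  have hv33 : 33 ≤ v := by
    have : 100 / 3 ≤ n / 3 := Nat.div_le_div_right hn
    simpa using this
  have hvR : (33:ℝ) ≤ (v:ℝ) := by exact_mod_cast hv33
  have hvpos : (0:ℝ) < (v:ℝ) := by linarith
  have hvne : (v:ℕ) ≠ 0 := by omega
  have h3v : ((3 * v : ℕ) : ℝ) ≤ (n:ℝ) := by
    have : 3 * v ≤ n := by omega
    exact_mod_cast this
  have h3vR : 3 * (v:ℝ) ≤ (n:ℝ) := by push_cast at h3v; linarith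
  have hnlow : (n:ℝ) ≤ 3 * (v:ℝ) + 2 := by
    have : n ≤ 3 * v + 2 := by omega
    exact_mod_cast this
  refine ⟨phi / v, 1 / v, by positivity, ?_⟩
  intro i hi
  have hlog := log_ge_three hn
  have hphib := phi_bounds
  -- bound on i
  have hipos : (0:ℝ) ≤ (i:ℝ) := Nat.cast_nonneg i
  have h10 : (0:ℝ) < 10 * Real.log n := by linarith
  rw [lt_div_iff₀ h10] at hi
  have hi30 : 30 * (i:ℝ) < (n:ℝ) := by nlinarith
  have hiv : (i:ℝ) + 1 < (v:ℝ) := by nlinarith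
  -- the element of the progression
  have hy : phi / v + (i:ℝ) * (1 / v) = ((i:ℝ) + phi) / v := by
    field_simp; ring
  rw [hy]
  set y : ℝ := ((i:ℝ) + phi) / v with hydef
  have hirr : Irrational y := by
    have h1 : Irrational ((i:ℕ) + phi) := irr_phi.natCast_add i
    exact h1.div_natCast hvne
  have hy0 : 0 < y := by
    rw [hydef]
    have : (0:ℝ) < (i:ℝ) + phi := by linarith [hphib.1]
    positivity
  have hy1 : y < 1 := by
    rw [hydef, div_lt_one hvpos]
    linarith [hphib.2]
  set B : ℝ := 3 * (v:ℝ) with hBdef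
  have hB : 0 < B := by rw [hBdef]; linarith
  have hBn : B ≤ (n:ℝ) := by rw [hBdef]; linarith
  have hhyp : ∀ q p : ℤ, 1 ≤ q → 1/B < (q : ℝ) * |(q : ℝ) * y - p| := by
    intro q p hq
    have hqR : (1:ℝ) ≤ (q:ℝ) := by exact_mod_cast hq
    have hgold := golden_bound q (p * (v:ℕ) - q * (i:ℕ)) hq
    have he : (q:ℝ) * y - p = ((q:ℝ) * phi - ((p * (v:ℕ) - q * (i:ℕ) : ℤ) : ℝ)) / (v:ℝ) := by
      rw [hydef]
      push_cast
      field_simp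
      ring
    rw [he, abs_div, abs_of_pos hvpos]
    rw [hBdef]
    rw [div_lt_iff₀ (by linarith : (0:ℝ) < 3 * (v:ℝ))]
    have h2 : (q:ℝ) * (|(q:ℝ) * phi - ((p * (v:ℕ) - q * (i:ℕ) : ℤ) : ℝ)| / (v:ℝ)) * (3 * (v:ℝ))
        = 3 * ((q:ℝ) * |(q:ℝ) * phi - ((p * (v:ℕ) - q * (i:ℕ) : ℤ) : ℝ)|) := by
      field_simp
    rw [h2]
    linarith
  have hkey := key B y hB hirr hy0 hy1 hhyp
  refine ⟨hirr, ⟨hy0, hy1⟩, fun k => ?_⟩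
  obtain ⟨_, hk0, _, hklt⟩ := hkey k
  have hlt : 1 / (gaussMap^[k] y) < (n:ℝ) := lt_of_lt_of_le hklt hBn
  have := Int.floor_le_floor (le_of_lt hlt)
  rwa [Int.floor_natCast] at this
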